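/- The time derivative of the relative entropy H_q(x) = Σ_{α: q_{iα}>0} q_{iα} log(q_{iα}/x_{iα}) along the replicator dynamics ẋ_{iα} = x_{iα}(ωᵢ(x) − ω_{iα}(x)) equals −L_q(x), where L_q(x) = Σ_{i,α}(x_{iα} − q_{iα}) ω_{iα}(x) is the adjoint potential; moreover L_q(x) = Σ_r (y_r − y*_r) φ_r(y_r) where y = P(x), y* = P(q). -/

import Mathlib

/-- Along the replicator dynamics, the time derivative of the
relative entropy `H_q` equals `-L_q(x)`, where
`L_q(x) = Σ_{i,α} (x_{iα} - q_{iα}) ω_{iα}(x)` is the adjoint potential; moreover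
`L_q(x) = Σ_r (y_r - y*_r) φ_r(y_r)` with `y = P(x)`, `y* = P(q)`. -/
theorem stmt9 {ι : Type*} [Fintype ι] {A : ι → Type*} [∀ i, Fintype (A i)]
    {E : Type*} [Fintype E] [DecidableEq E]
    (ρ : ι → ℝ) (hρ : ∀ i, 0 < ρ i)
    (inc : (Σ i, A i) → Finset E)
    (φ : E → ℝ → ℝ)
    (load : ((Σ i, A i) → ℝ) → E → ℝ)
    (hload : ∀ x r, load x r = ∑ a : Σ i, A i, (if r ∈ inc a then x a else 0))
    (ω : (Σ i, A i) → ((Σ i, A i) → ℝ) → ℝ)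
    (hω : ∀ a x, ω a x = ∑ r ∈ inc a, φ r (load x r))
    (wbar : ι → ((Σ i, A i) → ℝ) → ℝ)
    (hwbar : ∀ i x, wbar i x = (ρ i)⁻¹ * ∑ α : A i, x ⟨i, α⟩ * ω ⟨i, α⟩ x)
    (q : (Σ i, A i) → ℝ)
    (hq : (∀ a, 0 ≤ q a) ∧ ∀ i, ∑ α : A i, q ⟨i, α⟩ = ρ i)
    (hqW : ∀ i, ∀ α β : A i, 0 < q ⟨i, α⟩ → ω ⟨i, α⟩ q ≤ ω ⟨i, β⟩ q)
    (Hq : ((Σ i, A i) → ℝ) → ℝ)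
    (hHq : ∀ x, Hq x = ∑ a : Σ i, A i,
      (if 0 < q a then q a * Real.log (q a / x a) else 0))
    (x : ℝ → (Σ i, A i) → ℝ)
    (hode : ∀ (a : Σ i, A i) (t : ℝ),
      HasDerivAt (fun s => x s a) (x t a * (wbar a.1 (x t) - ω a (x t))) t)
    (hint : ∀ t, (∀ a, 0 < x t a) ∧ ∀ i, ∑ α : A i, x t ⟨i, α⟩ = ρ i)
    (t : ℝ) :
    HasDerivAt (fun s => Hq (x s)) (-∑ a : Σ i, A i, (x t a - q a) * ω a (x t)) t ∧
      ∑ a : Σ i, A i, (x t a - q a) * ω a (x t)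
        = ∑ r, (load (x t) r - load q r) * φ r (load (x t) r) := by
  obtain ⟨hq0, hqρ⟩ := hq
  constructor
  · -- derivative part
    have key : ∀ a : Σ i, A i, HasDerivAt
        (fun s => if 0 < q a then q a * Real.log (q a / x s a) else 0)
        (if 0 < q a then q a * (ω a (x t) - wbar a.1 (x t)) else 0) t := by
      intro a
      by_cases hqa : 0 < q a
      · simp only [hqa, if_true]
        have hxpos : ∀ s, 0 < x s a := fun s => (hint s).1 a
        have heq : (fun s => q a * Real.log (q a / x s a))
            = fun s => q a * (Real.log (q a) - Real.log (x s a)) := by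
          funext s
          rw [Real.log_div (ne_of_gt hqa) (ne_of_gt (hxpos s))]
        rw [heq]
        have hlog : HasDerivAt (fun s => Real.log (x s a))
            (x t a * (wbar a.1 (x t) - ω a (x t)) / x t a) t :=
          (hode a t).log (ne_of_gt (hxpos t))
        have hd : HasDerivAt (fun s => q a * (Real.log (q a) - Real.log (x s a)))
            (q a * (0 - x t a * (wbar a.1 (x t) - ω a (x t)) / x t a)) t :=
          ((hasDerivAt_const t (Real.log (q a))).sub hlog).const_mul (q a)
        convert hd using 1
        have hx : x t a ≠ 0 := ne_of_gt (hxpos t)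
        field_simp
        ring
      · simp only [hqa, if_false]
        exact hasDerivAt_const t 0
    have hsum : HasDerivAt (fun s => ∑ a : Σ i, A i,
        (if 0 < q a then q a * Real.log (q a / x s a) else 0))
        (∑ a : Σ i, A i, (if 0 < q a then q a * (ω a (x t) - wbar a.1 (x t)) else 0)) t :=
      HasDerivAt.fun_sum (fun a _ => key a)
    have hfun : (fun s => Hq (x s)) = fun s => ∑ a : Σ i, A i,
        (if 0 < q a then q a * Real.log (q a / x s a) else 0) := by
      funext s; rw [hHq]
    rw [hfun]
    convert hsum using 1
    -- algebra: ∑ ite ... = -∑ (x - q) ω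
    have hite : ∀ a : Σ i, A i,
        (if 0 < q a then q a * (ω a (x t) - wbar a.1 (x t)) else 0)
          = q a * ω a (x t) - q a * wbar a.1 (x t) := by
      intro a
      by_cases hqa : 0 < q a
      · simp [hqa]; ring
      · have : q a = 0 := le_antisymm (not_lt.mp hqa) (hq0 a)
        simp [hqa, this]
    have hqw : ∑ a : Σ i, A i, q a * wbar a.1 (x t)
        = ∑ a : Σ i, A i, x t a * ω a (x t) := by
      rw [← Finset.univ_sigma_univ, Finset.sum_sigma, Finset.sum_sigma]
      refine Finset.sum_congr rfl fun i _ => ?_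
      have : ∑ α : A i, q ⟨i, α⟩ * wbar i (x t)
          = (∑ α : A i, q ⟨i, α⟩) * wbar i (x t) := by
        rw [Finset.sum_mul]
      rw [this, hqρ i, hwbar]
      field_simp
      exact mul_div_cancel_left₀ _ (ne_of_gt (hρ i))
    simp_rw [hite]
    rw [Finset.sum_sub_distrib, hqw, ← Finset.sum_sub_distrib,
      neg_eq_iff_eq_neg, ← Finset.sum_neg_distrib]
    exact Finset.sum_congr rfl fun a _ => by ring
  · -- second part
    have : ∀ a : Σ i, A i, (x t a - q a) * ω a (x t)
        = ∑ r : E, (if r ∈ inc a then (x t a - q a) * φ r (load (x t) r) else 0) := by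
      intro a
      rw [hω, Finset.mul_sum, ← Finset.sum_filter]
      congr 1
      ext r
      simp [Finset.mem_filter]
    simp_rw [this]
    rw [Finset.sum_comm]
    refine Finset.sum_congr rfl fun r _ => ?_
    rw [hload, hload, ← Finset.sum_sub_distrib, Finset.sum_mul]
    refine Finset.sum_congr rfl fun a _ => ?_
    by_cases h : r ∈ inc a <;> simp [h]
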